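/- For all natural numbers a, b, c, and for every fixed k, the sequence h ↦ θ_h defined by θ_h = Σ_{l=0}^h C(a, h-l) C(a+b+c-h+l, k) C(c, l) for 0 ≤ h ≤ a+c is log-concave: θ_h^2 ≥ θ_{h-1} θ_{h+1} for 1 ≤ h ≤ a+c-1. -/

import Mathlib

lemma lcA (a r s : ℕ) (h1 : 1 ≤ r) (hrs : r ≤ s) :
    a.choose (r-1) * a.choose (s+1) ≤ a.choose r * a.choose s := by
  rcases le_or_gt a s with hs | hs
  · rw [Nat.choose_eq_zero_of_lt (show a < s + 1 by omega)]
    simp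
  · have e1 : a.choose r * r = a.choose (r-1) * (a - (r-1)) := by
      have := Nat.choose_succ_right_eq a (r-1)
      rwa [show r - 1 + 1 = r by omega] at this
    have e2 : a.choose (s+1) * (s+1) = a.choose s * (a - s) := Nat.choose_succ_right_eq a s
    have key : r * (a - s) ≤ (s+1) * (a - (r-1)) :=
      Nat.mul_le_mul (by omega) (by omega)
    have main : a.choose (r-1) * a.choose (s+1) * (r * (s+1))
        ≤ a.choose r * a.choose s * (r * (s+1)) := by
      calc a.choose (r-1) * a.choose (s+1) * (r * (s+1))
          = a.choose (r-1) * (a.choose (s+1) * (s+1)) * r := by ring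
        _ = a.choose (r-1) * (a.choose s * (a - s)) * r := by rw [e2]
        _ = (a.choose (r-1) * a.choose s) * (r * (a - s)) := by ring
        _ ≤ (a.choose (r-1) * a.choose s) * ((s+1) * (a - (r-1))) :=
            Nat.mul_le_mul_left _ key
        _ = (a.choose (r-1) * (a - (r-1))) * a.choose s * (s+1) := by ring
        _ = (a.choose r * r) * a.choose s * (s+1) := by rw [← e1]
        _ = a.choose r * a.choose s * (r * (s+1)) := by ring
    exact Nat.le_of_mul_le_mul_right main (by positivity)

lemma lcB (k m n : ℕ) (hnm : n ≤ m) :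
    (m+1).choose k * (n-1).choose k ≤ m.choose k * n.choose k := by
  rcases Nat.lt_or_ge n k with hk | hk
  · rw [Nat.choose_eq_zero_of_lt (show n - 1 < k by omega),
        Nat.choose_eq_zero_of_lt hk]
    simp
  · rcases Nat.eq_zero_or_pos n with hn | hn
    · subst hn
      interval_cases k
      simp
    · have e1 : m.choose k * (m+1) = (m+1).choose k * (m+1-k) := Nat.choose_mul_succ_eq m k
      have e2 : (n-1).choose k * n = n.choose k * (n-k) := by
        have := Nat.choose_mul_succ_eq (n-1) k
        rwa [show n - 1 + 1 = n by omega] at this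
      have key : (m+1) * (n-k) ≤ (m+1-k) * n := by
        have d1 : (m+1)*(n-k) + (m+1)*k = (m+1)*n := by
          rw [← Nat.mul_add]; congr 1; omega
        have d2 : (m+1-k)*n + k*n = (m+1)*n := by
          rw [← Nat.add_mul]; congr 1; omega
        have hkn : k*n ≤ (m+1)*k := by
          calc k*n ≤ k*(m+1) := Nat.mul_le_mul_left k (by omega)
            _ = (m+1)*k := mul_comm _ _
        omega
      have main : (m+1).choose k * (n-1).choose k * ((m+1-k) * n)
          ≤ m.choose k * n.choose k * ((m+1-k) * n) := by
        calc (m+1).choose k * (n-1).choose k * ((m+1-k) * n)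
            = ((m+1).choose k * (m+1-k)) * ((n-1).choose k * n) := by ring
          _ = (m.choose k * (m+1)) * (n.choose k * (n-k)) := by rw [← e1, e2]
          _ = m.choose k * n.choose k * ((m+1) * (n-k)) := by ring
          _ ≤ m.choose k * n.choose k * ((m+1-k) * n) := Nat.mul_le_mul_left _ key
      exact Nat.le_of_mul_le_mul_right main (Nat.mul_pos (by omega) hn)


lemma conv_lc (U V : ℤ → ℤ)
    (hU0 : ∀ n, 0 ≤ U n) (hV0 : ∀ n, 0 ≤ V n)
    (hU : ∀ p q : ℤ, p ≤ q → U (p-1) * U (q+1) ≤ U p * U q)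
    (hV : ∀ p q : ℤ, p ≤ q → V (p-1) * V (q+1) ≤ V p * V q)
    (N : ℕ) (hUz : ∀ j : ℤ, ((N:ℤ) - 1 ≤ j ∨ j < 0) → U j = 0)
    (t : ℤ) :
    (∑ r ∈ Finset.range N, U r * V (t - 1 - r)) * (∑ r ∈ Finset.range N, U r * V (t + 1 - r))
      ≤ (∑ r ∈ Finset.range N, U r * V (t - r)) * (∑ r ∈ Finset.range N, U r * V (t - r)) := by
  rcases Nat.eq_zero_or_pos N with hN | hN
  · subst hN; simp
  obtain ⟨n, rfl⟩ : ∃ n, N = n + 1 := ⟨N - 1, by omega⟩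
  -- shift lemma
  have shift : ∀ f : ℤ → ℤ,
      (∑ r ∈ Finset.range (n+1), U ((r:ℤ) - 1) * f (r:ℤ))
        = ∑ r ∈ Finset.range (n+1), U r * f ((r:ℤ) + 1) := by
    intro f
    rw [Finset.sum_range_succ' (fun r => U ((r:ℤ) - 1) * f (r:ℤ)) n]
    rw [Finset.sum_range_succ (fun r => U (r:ℤ) * f ((r:ℤ) + 1)) n]
    simp only [Nat.cast_add, Nat.cast_one, Nat.cast_zero, add_sub_cancel_right, zero_sub]
    rw [hUz (-1) (Or.inr (by omega)), hUz (n:ℤ) (Or.inl (by push_cast; omega))]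
    simp
  -- the four representations
  set A : ℕ → ℤ := fun r => U r with hA
  set A' : ℕ → ℤ := fun r => U ((r:ℤ) - 1) with hA'
  set B : ℕ → ℤ := fun r => V (t - r) with hB
  set B' : ℕ → ℤ := fun r => V (t + 1 - r) with hB'
  have repM : (∑ r ∈ Finset.range (n+1), U r * V (t - 1 - r))
      = ∑ r ∈ Finset.range (n+1), A' r * B r := by
    rw [hA', hB]
    rw [shift (fun x => V (t - x))]
    apply Finset.sum_congr rfl
    intro i _
    congr 1
    ring
  have repP : (∑ r ∈ Finset.range (n+1), U r * V (t - r))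
      = ∑ r ∈ Finset.range (n+1), A' r * B' r := by
    rw [hA', hB']
    rw [shift (fun x => V (t + 1 - x))]
    apply Finset.sum_congr rfl
    intro i _
    congr 1
    ring
  -- nonnegativity of the pair terms
  have hg : ∀ r s : ℕ, r < s →
      0 ≤ (A r * A' s - A' r * A s) * (B r * B' s - B s * B' r) := by
    intro r s hrs
    apply mul_nonneg
    · rw [sub_nonneg]
      have := hU r ((s:ℤ) - 1) (by push_cast; omega)
      simp only [sub_add_cancel] at this
      calc A' r * A s = U ((r:ℤ)-1) * U s := rfl
        _ ≤ U r * U ((s:ℤ)-1) := this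
        _ = A r * A' s := rfl
    · rw [sub_nonneg]
      have := hV (t + 1 - s) (t - r) (by push_cast; omega)
      have e : t + 1 - (s:ℤ) - 1 = t - s := by ring
      have e2 : t - (r:ℤ) + 1 = t + 1 - r := by ring
      rw [e, e2] at this
      calc B s * B' r = V (t - s) * V (t + 1 - r) := rfl
        _ ≤ V (t + 1 - s) * V (t - r) := this
        _ = B r * B' s := by rw [mul_comm]
  have hgall : ∀ r ∈ Finset.range (n+1), ∀ s ∈ Finset.range (n+1),
      0 ≤ (A r * A' s - A' r * A s) * (B r * B' s - B s * B' r) := by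
    intro r _ s _
    rcases lt_trichotomy r s with h | h | h
    · exact hg r s h
    · subst h
      have : (A r * A' r - A' r * A r) * (B r * B' r - B r * B' r) = 0 := by ring
      rw [this]
    · have e : (A r * A' s - A' r * A s) * (B r * B' s - B s * B' r)
          = (A s * A' r - A' s * A r) * (B s * B' r - B r * B' s) := by ring
      rw [e]
      exact hg s r h
  -- the expansion identity
  have expand :
      (∑ r ∈ Finset.range (n+1), A r * B r) * (∑ r ∈ Finset.range (n+1), A' r * B' r)
        + (∑ r ∈ Finset.range (n+1), A r * B r) * (∑ r ∈ Finset.range (n+1), A' r * B' r)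
        - (∑ r ∈ Finset.range (n+1), A' r * B r) * (∑ r ∈ Finset.range (n+1), A r * B' r)
        - (∑ r ∈ Finset.range (n+1), A' r * B r) * (∑ r ∈ Finset.range (n+1), A r * B' r)
      = ∑ r ∈ Finset.range (n+1), ∑ s ∈ Finset.range (n+1),
          (A r * A' s - A' r * A s) * (B r * B' s - B s * B' r) := by
    rw [Finset.sum_mul_sum, Finset.sum_mul_sum]
    have c1 : (∑ r ∈ Finset.range (n+1), ∑ s ∈ Finset.range (n+1), (A r * B r) * (A' s * B' s))
        = ∑ r ∈ Finset.range (n+1), ∑ s ∈ Finset.range (n+1), (A s * B s) * (A' r * B' r) :=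
      Finset.sum_comm
    have c2 : (∑ r ∈ Finset.range (n+1), ∑ s ∈ Finset.range (n+1), (A' r * B r) * (A s * B' s))
        = ∑ r ∈ Finset.range (n+1), ∑ s ∈ Finset.range (n+1), (A' s * B s) * (A r * B' r) :=
      Finset.sum_comm
    nth_rewrite 2 [c1]
    nth_rewrite 2 [c2]
    rw [← Finset.sum_add_distrib, ← Finset.sum_sub_distrib, ← Finset.sum_sub_distrib]
    apply Finset.sum_congr rfl
    intro r _
    rw [← Finset.sum_add_distrib, ← Finset.sum_sub_distrib, ← Finset.sum_sub_distrib]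
    apply Finset.sum_congr rfl
    intro s _
    ring
  have pos : 0 ≤ ∑ r ∈ Finset.range (n+1), ∑ s ∈ Finset.range (n+1),
      (A r * A' s - A' r * A s) * (B r * B' s - B s * B' r) :=
    Finset.sum_nonneg fun r hr => Finset.sum_nonneg fun s hs => hgall r hr s hs
  have hQ : (∑ r ∈ Finset.range (n+1), U (r:ℤ) * V (t + 1 - r))
      = ∑ r ∈ Finset.range (n+1), A r * B' r := rfl
  rw [repM, repP, hQ]
  rw [repP] at expand
  linarith [expand, pos]



/-- the `u` sequence extended to `ℤ` -/
noncomputable def Useq (a b c k : ℕ) : ℤ → ℤ := fun n =>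
  if 0 ≤ n then ((a.choose n.toNat * (a+b+c - n.toNat).choose k : ℕ) : ℤ) else 0

/-- the `v` sequence extended to `ℤ` -/
noncomputable def Vseq (c : ℕ) : ℤ → ℤ := fun n =>
  if 0 ≤ n then ((c.choose n.toNat : ℕ) : ℤ) else 0

lemma Useq_nonneg (a b c k : ℕ) (n : ℤ) : 0 ≤ Useq a b c k n := by
  unfold Useq; split <;> positivity

lemma Vseq_nonneg (c : ℕ) (n : ℤ) : 0 ≤ Vseq c n := by
  unfold Vseq; split <;> positivity

lemma Vseq_lc (c : ℕ) (p q : ℤ) (hpq : p ≤ q) :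
    Vseq c (p-1) * Vseq c (q+1) ≤ Vseq c p * Vseq c q := by
  rcases le_or_gt 1 p with hp | hp
  · -- 1 ≤ p ≤ q
    set r := p.toNat with hr
    set s := q.toNat with hs
    have hpr : (p:ℤ) = (r:ℤ) := by omega
    have hqs : (q:ℤ) = (s:ℤ) := by omega
    have h1 : (1:ℕ) ≤ r := by omega
    have h2 : r ≤ s := by omega
    unfold Vseq
    rw [if_pos (by omega), if_pos (by omega), if_pos (by omega), if_pos (by omega)]
    have e1 : (p-1).toNat = r - 1 := by omega
    have e2 : (q+1).toNat = s + 1 := by omega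
    rw [e1, e2, hpr, hqs]
    simp only [Int.toNat_natCast]
    exact_mod_cast lcA c r s h1 h2
  · -- p ≤ 0 : left side is zero
    have : Vseq c (p-1) = 0 := by unfold Vseq; rw [if_neg (by omega)]
    rw [this, zero_mul]
    exact mul_nonneg (Vseq_nonneg c p) (Vseq_nonneg c q)

lemma lcU (a T k r s : ℕ) (haT : a ≤ T) (h1 : 1 ≤ r) (hrs : r ≤ s) :
    (a.choose (r-1) * (T-(r-1)).choose k) * (a.choose (s+1) * (T-(s+1)).choose k)
      ≤ (a.choose r * (T-r).choose k) * (a.choose s * (T-s).choose k) := by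
  rcases le_or_gt (s+1) a with hsa | hsa
  · -- s + 1 ≤ a ≤ T
    have hB := lcB k (T-r) (T-s) (by omega)
    have hA := lcA a r s h1 hrs
    have eB1 : T - (r-1) = (T-r) + 1 := by omega
    have eB2 : T - (s+1) = (T-s) - 1 := by omega
    rw [eB1, eB2]
    calc (a.choose (r-1) * (T-r+1).choose k) * (a.choose (s+1) * ((T-s)-1).choose k)
        = (a.choose (r-1) * a.choose (s+1)) * ((T-r+1).choose k * ((T-s)-1).choose k) := by
          ring
      _ ≤ (a.choose r * a.choose s) * ((T-r).choose k * (T-s).choose k) :=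
          Nat.mul_le_mul hA hB
      _ = (a.choose r * (T-r).choose k) * (a.choose s * (T-s).choose k) := by ring
  · -- a < s+1 : left side is zero
    rw [Nat.choose_eq_zero_of_lt (show a < s+1 by omega)]
    simp

lemma Useq_lc (a b c k : ℕ) (p q : ℤ) (hpq : p ≤ q) :
    Useq a b c k (p-1) * Useq a b c k (q+1) ≤ Useq a b c k p * Useq a b c k q := by
  rcases le_or_gt 1 p with hp | hp
  · set r := p.toNat with hr
    set s := q.toNat with hs
    have hpr : (p:ℤ) = (r:ℤ) := by omega
    have hqs : (q:ℤ) = (s:ℤ) := by omega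
    unfold Useq
    rw [if_pos (by omega), if_pos (by omega), if_pos (by omega), if_pos (by omega)]
    have e1 : (p-1).toNat = r - 1 := by omega
    have e2 : (q+1).toNat = s + 1 := by omega
    rw [e1, e2, hpr, hqs]
    simp only [Int.toNat_natCast]
    exact_mod_cast lcU a (a+b+c) k r s (by omega) (by omega) (by omega)
  · have : Useq a b c k (p-1) = 0 := by unfold Useq; rw [if_neg (by omega)]
    rw [this, zero_mul]
    exact mul_nonneg (Useq_nonneg a b c k p) (Useq_nonneg a b c k q)

lemma Useq_zero (a b c k : ℕ) (N : ℕ) (hN : a + 2 ≤ N) (j : ℤ)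
    (hj : ((N:ℤ) - 1 ≤ j ∨ j < 0)) : Useq a b c k j = 0 := by
  unfold Useq
  rcases hj with hj | hj
  · rw [if_pos (by omega)]
    have : a < j.toNat := by omega
    rw [Nat.choose_eq_zero_of_lt this]
    simp
  · rw [if_neg (by omega)]

lemma sum_eq (a b c k N m : ℕ) (hm : m ≤ a + b + c) (hmN : m + 1 ≤ N) :
    ((∑ l ∈ Finset.range (m+1),
        a.choose (m-l) * (a+b+c-m+l).choose k * c.choose l : ℕ) : ℤ)
      = ∑ r ∈ Finset.range N, Useq a b c k r * Vseq c ((m:ℤ) - r) := by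
  have main : ∀ r ∈ Finset.range (m+1),
      Useq a b c k r * Vseq c ((m:ℤ) - r)
        = ((a.choose r * (a+b+c-r).choose k * c.choose (m-r) : ℕ) : ℤ) := by
    intro r hr
    simp only [Finset.mem_range] at hr
    unfold Useq Vseq
    rw [if_pos (by omega), if_pos (by omega)]
    have e1 : ((r:ℤ)).toNat = r := by omega
    have e2 : ((m:ℤ) - r).toNat = m - r := by omega
    rw [e1, e2]
    push_cast
    ring
  rw [← Finset.sum_subset (Finset.range_subset_range.mpr hmN)
      (fun x _ hx => by
        have hx' : m < x := by simpa [Finset.mem_range] using hx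
        have : Vseq c ((m:ℤ) - x) = 0 := by
          unfold Vseq; rw [if_neg (by omega)]
        rw [this, mul_zero])]
  rw [Finset.sum_congr rfl main]
  rw [← Nat.cast_sum]
  congr 1
  have reflect := Finset.sum_range_reflect
    (fun r => a.choose r * (a+b+c-r).choose k * c.choose (m-r)) (m+1)
  simp only [Nat.add_sub_cancel] at reflect
  rw [← reflect]
  apply Finset.sum_congr rfl
  intro l hl
  simp only [Finset.mem_range] at hl
  have e1 : m - (m - l) = l := by omega
  have e2 : a+b+c - (m - l) = a+b+c-m+l := by omega
  rw [e1, e2]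

theorem theta_log_concave (a b c k : ℕ) :
    ∀ h, 1 ≤ h → h ≤ a + c - 1 →
      (∑ l ∈ Finset.range (h + 1),
          a.choose (h - l) * (a + b + c - h + l).choose k * c.choose l) ^ 2 ≥
        (∑ l ∈ Finset.range h,
            a.choose (h - 1 - l) * (a + b + c - (h - 1) + l).choose k * c.choose l) *
        (∑ l ∈ Finset.range (h + 2),
            a.choose (h + 1 - l) * (a + b + c - (h + 1) + l).choose k * c.choose l) := by
  intro h h1 h2
  have hac : h + 1 ≤ a + c := by omega
  set N := a + c + 3 with hN
  have main := conv_lc (Useq a b c k) (Vseq c) (Useq_nonneg a b c k) (Vseq_nonneg c)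
    (Useq_lc a b c k) (Vseq_lc c) N (Useq_zero a b c k N (by omega)) (h : ℤ)
  have s1 := sum_eq a b c k N h (by omega) (by omega)
  have s0 := sum_eq a b c k N (h-1) (by omega) (by omega)
  have s2 := sum_eq a b c k N (h+1) (by omega) (by omega)
  rw [show ((h-1 : ℕ):ℤ) = (h:ℤ) - 1 by omega] at s0
  rw [show h-1+1 = h by omega] at s0
  rw [show ((h+1 : ℕ):ℤ) = (h:ℤ) + 1 by push_cast; ring] at s2
  rw [show h+1+1 = h+2 by omega] at s2
  rw [ge_iff_le, ← Nat.cast_le (α := ℤ), Nat.cast_mul, Nat.cast_pow, s0, s1, s2, sq]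
  exact main
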